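/- Let q be an odd prime power and w ∈ F_q with η(w) = −1, where η is the quadratic character. Then the number of pairs (u₁, u₂) ∈ F_q* × F_q* such that u₁·x² + u₂·x + u₂·w = 0 has exactly two distinct solutions x ∈ F_q equals (q−1)(q−3)/2. -/

import Mathlib

open Finset

/-- Count of roots of a quadratic is 2 iff the discriminant is a nonzero square. -/
lemma roots_card_two_iff {F : Type*} [Field F] [Fintype F] [DecidableEq F]
    [NeZero (2 : F)] {a b c : F} (ha : a ≠ 0) :
    (Finset.univ.filter (fun x : F => a * x ^ 2 + b * x + c = 0)).card = 2 ↔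
      (IsSquare (discrim a b c) ∧ discrim a b c ≠ 0) := by
  constructor
  · intro h
    have hne : (Finset.univ.filter (fun x : F => a * x ^ 2 + b * x + c = 0)).Nonempty := by
      rw [← Finset.card_pos, h]; norm_num
    obtain ⟨x, hx⟩ := hne
    simp only [Finset.mem_filter, Finset.mem_univ, true_and] at hx
    have hd : discrim a b c = (2 * a * x + b) ^ 2 :=
      discrim_eq_sq_of_quadratic_eq_zero (by linear_combination hx)
    refine ⟨⟨2 * a * x + b, by rw [hd, sq]⟩, ?_⟩
    intro h0
    have h1 : (Finset.univ.filter (fun x : F => a * x ^ 2 + b * x + c = 0)) = {-b / (2 * a)} := by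
      ext y
      simp only [Finset.mem_filter, Finset.mem_univ, true_and, Finset.mem_singleton]
      rw [sq, quadratic_eq_zero_iff_of_discrim_eq_zero ha h0]
    rw [h1] at h
    simp at h
  · rintro ⟨⟨s, hs⟩, hd⟩
    have hs0 : s ≠ 0 := by rintro rfl; rw [mul_zero] at hs; exact hd hs
    have h1 : (Finset.univ.filter (fun x : F => a * x ^ 2 + b * x + c = 0)) =
        {(-b + s) / (2 * a), (-b - s) / (2 * a)} := by
      ext y
      simp only [Finset.mem_filter, Finset.mem_univ, true_and, Finset.mem_insert,
        Finset.mem_singleton]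
      rw [sq, quadratic_eq_zero_iff ha hs]
    rw [h1]
    refine Finset.card_pair ?_
    intro hcontra
    have h2a : (2 : F) * a ≠ 0 := mul_ne_zero (NeZero.ne 2) ha
    have : -b + s = -b - s := by
      field_simp at hcontra
      linear_combination hcontra
    have : (2 : F) * s = 0 := by linear_combination this
    rcases mul_eq_zero.mp this with h | h
    · exact NeZero.ne (2 : F) h
    · exact hs0 h

theorem stmt10 {F : Type*} [Field F] [Fintype F] [DecidableEq F]
    (hq : Odd (Fintype.card F)) (w : F) (hw : quadraticChar F w = -1) :
    (Finset.univ.filter (fun u : F × F => u.1 ≠ 0 ∧ u.2 ≠ 0 ∧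
        (Finset.univ.filter (fun x : F => u.1 * x ^ 2 + u.2 * x + u.2 * w = 0)).card = 2)).card
      = (Fintype.card F - 1) * (Fintype.card F - 3) / 2 := by
  classical
  set q := Fintype.card F with hqdef
  have hchar : ringChar F ≠ 2 := by
    intro h
    have h' := FiniteField.even_card_of_char_two h
    rw [← hqdef] at h'
    rcases hq with ⟨k, hk⟩
    omega
  have h2 : (2 : F) ≠ 0 := Ring.two_ne_zero hchar
  haveI : NeZero (2 : F) := ⟨h2⟩
  have h4 : (4 : F) ≠ 0 := by
    have : (4 : F) = 2 * 2 := by norm_num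
    rw [this]; exact mul_ne_zero h2 h2
  have hw0 : w ≠ 0 := by
    intro h; rw [h] at hw; simp at hw
  -- the set Q of nonzero squares
  set Q : Finset F := Finset.univ.filter (fun t => t ≠ 0 ∧ IsSquare t) with hQdef
  have hmemQ : ∀ t : F, t ∈ Q ↔ t ≠ 0 ∧ IsSquare t := by
    intro t; simp [hQdef]
  -- 2 * Q.card = q - 1
  have hQcard : 2 * Q.card = q - 1 := by
    have hA : (Finset.univ.filter (fun x : F => x ≠ 0)).card = q - 1 := by
      rw [Finset.filter_ne' Finset.univ 0, Finset.card_erase_of_mem (Finset.mem_univ 0),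
        Finset.card_univ]
    have hf : ∀ x ∈ Finset.univ.filter (fun x : F => x ≠ 0), x ^ 2 ∈ Q := by
      intro x hx
      simp only [Finset.mem_filter, Finset.mem_univ, true_and] at hx
      rw [hmemQ]
      exact ⟨pow_ne_zero 2 hx, ⟨x, (sq x).symm ▸ rfl⟩⟩
    have hfib : ∀ t ∈ Q,
        ((Finset.univ.filter (fun x : F => x ≠ 0)).filter (fun x => x ^ 2 = t)).card = 2 := by
      intro t ht
      rw [hmemQ] at ht
      obtain ⟨ht0, r, hr⟩ := ht
      have hr0 : r ≠ 0 := by rintro rfl; rw [mul_zero] at hr; exact ht0 hr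
      have : (Finset.univ.filter (fun x : F => x ≠ 0)).filter (fun x => x ^ 2 = t) = {r, -r} := by
        ext x
        simp only [Finset.mem_filter, Finset.mem_univ, true_and, Finset.mem_insert,
          Finset.mem_singleton]
        constructor
        · rintro ⟨-, hx⟩
          rw [hr, ← sq] at hx
          exact sq_eq_sq_iff_eq_or_eq_neg.mp hx
        · rintro (rfl | rfl)
          · exact ⟨hr0, by rw [hr, sq]⟩
          · exact ⟨neg_ne_zero.mpr hr0, by rw [hr]; ring⟩
      rw [this, Finset.card_pair]
      intro hcontra
      exact hr0 ((Ring.eq_self_iff_eq_zero_of_char_ne_two hchar).mp hcontra.symm)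
    have hsum := (Finset.card_eq_sum_card_fiberwise hf).trans
      (Finset.sum_congr rfl hfib)
    rw [hA] at hsum
    rw [hsum, Finset.sum_const, smul_eq_mul, mul_comm]
  have hq3 : 3 ≤ q := by
    have := Fintype.one_lt_card (α := F)
    rcases hq with ⟨k, hk⟩
    omega
  -- rewrite the condition via the discriminant
  have hset : (Finset.univ.filter (fun u : F × F => u.1 ≠ 0 ∧ u.2 ≠ 0 ∧
        (Finset.univ.filter (fun x : F => u.1 * x ^ 2 + u.2 * x + u.2 * w = 0)).card = 2))
      = Finset.univ.filter (fun u : F × F => u.1 ≠ 0 ∧ u.2 ≠ 0 ∧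
          IsSquare (discrim u.1 u.2 (u.2 * w)) ∧ discrim u.1 u.2 (u.2 * w) ≠ 0) := by
    ext u
    simp only [Finset.mem_filter, Finset.mem_univ, true_and]
    constructor
    · rintro ⟨h1, h2, h3⟩
      exact ⟨h1, h2, (roots_card_two_iff h1).mp h3⟩
    · rintro ⟨h1, h2, h3⟩
      exact ⟨h1, h2, (roots_card_two_iff h1).mpr h3⟩
  rw [hset]
  -- the target finset B
  set B : Finset (F × F) := (Finset.univ.filter (fun y : F => y ≠ 0)).biUnion
      (fun y => (Q.erase (y ^ 2)).image (fun t => (t, y))) with hBdef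
  have hmemB : ∀ p : F × F, p ∈ B ↔ p.2 ≠ 0 ∧ p.1 ∈ Q.erase (p.2 ^ 2) := by
    intro p
    simp only [hBdef, Finset.mem_biUnion, Finset.mem_filter, Finset.mem_univ, true_and,
      Finset.mem_image]
    constructor
    · rintro ⟨y, hy, t, ht, hpt⟩
      obtain ⟨rfl, rfl⟩ := Prod.mk.injEq .. ▸ hpt
      exact ⟨hy, ht⟩
    · rintro ⟨hy, ht⟩
      exact ⟨p.2, hy, p.1, ht, rfl⟩
  -- bijection
  have hcards : (Finset.univ.filter (fun u : F × F => u.1 ≠ 0 ∧ u.2 ≠ 0 ∧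
          IsSquare (discrim u.1 u.2 (u.2 * w)) ∧ discrim u.1 u.2 (u.2 * w) ≠ 0)).card
      = B.card := by
    apply Finset.card_nbij' (i := fun u => (discrim u.1 u.2 (u.2 * w), u.2))
      (j := fun p => ((p.2 ^ 2 - p.1) / (4 * p.2 * w), p.2))
    · intro u hu
      simp only [Finset.mem_coe, Finset.mem_filter, Finset.mem_univ, true_and] at hu
      obtain ⟨h1, h2, h3, h4'⟩ := hu
      rw [Finset.mem_coe, hmemB]
      refine ⟨h2, Finset.mem_erase.mpr ⟨?_, (hmemQ _).mpr ⟨h4', h3⟩⟩⟩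
      simp only [discrim]
      intro hc
      have : 4 * u.1 * (u.2 * w) = 0 := by linear_combination -hc
      rcases mul_eq_zero.mp this with h | h
      · rcases mul_eq_zero.mp h with h | h
        · exact h4 h
        · exact h1 h
      · rcases mul_eq_zero.mp h with h | h
        · exact h2 h
        · exact hw0 h
    · intro p hp
      rw [Finset.mem_coe, hmemB] at hp
      obtain ⟨hy, ht⟩ := hp
      rw [Finset.mem_erase, hmemQ] at ht
      obtain ⟨htne, ht0, htsq⟩ := ht
      have hden : 4 * p.2 * w ≠ 0 := mul_ne_zero (mul_ne_zero h4 hy) hw0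
      simp only [Finset.mem_coe, Finset.mem_filter, Finset.mem_univ, true_and]
      have hnum : p.2 ^ 2 - p.1 ≠ 0 := sub_ne_zero.mpr (Ne.symm htne)
      have hdisc : discrim ((p.2 ^ 2 - p.1) / (4 * p.2 * w)) p.2 (p.2 * w) = p.1 := by
        simp only [discrim]
        field_simp
        ring
      rw [hdisc]
      exact ⟨div_ne_zero hnum hden, hy, htsq, ht0⟩
    · intro u hu
      simp only [Finset.mem_coe, Finset.mem_filter, Finset.mem_univ, true_and] at hu
      obtain ⟨h1, h2, -, -⟩ := hu
      have hden : 4 * u.2 * w ≠ 0 := mul_ne_zero (mul_ne_zero h4 h2) hw0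
      have : (u.2 ^ 2 - discrim u.1 u.2 (u.2 * w)) / (4 * u.2 * w) = u.1 := by
        simp only [discrim]
        field_simp
        ring
      beta_reduce; rw [this]
    · intro p hp
      rw [Finset.mem_coe, hmemB] at hp
      obtain ⟨hy, ht⟩ := hp
      rw [Finset.mem_erase, hmemQ] at ht
      obtain ⟨htne, ht0, htsq⟩ := ht
      have hden : 4 * p.2 * w ≠ 0 := mul_ne_zero (mul_ne_zero h4 hy) hw0
      have : discrim ((p.2 ^ 2 - p.1) / (4 * p.2 * w)) p.2 (p.2 * w) = p.1 := by
        simp only [discrim]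
        field_simp
        ring
      beta_reduce; rw [this]
  rw [hcards]
  -- compute card of B
  have hBcard : B.card = (q - 1) * (Q.card - 1) := by
    rw [hBdef, Finset.card_biUnion]
    · rw [Finset.sum_congr rfl (fun y hy => ?_), Finset.sum_const, smul_eq_mul]
      · congr 1
        rw [Finset.filter_ne' Finset.univ 0, Finset.card_erase_of_mem (Finset.mem_univ 0),
          Finset.card_univ]
      · simp only [Finset.mem_filter, Finset.mem_univ, true_and] at hy
        rw [Finset.card_image_of_injective _ (fun a b hab => (Prod.mk.injEq .. ▸ hab).1),
          Finset.card_erase_of_mem]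
        rw [hmemQ]
        exact ⟨pow_ne_zero 2 hy, ⟨y, (sq y).symm ▸ rfl⟩⟩
    · intro x hx y hy hxy
      simp only [Finset.disjoint_left, Finset.mem_image]
      rintro p ⟨t, ht, rfl⟩ ⟨t', ht', hp⟩
      exact hxy (Prod.mk.injEq .. ▸ hp).2.symm
  rw [hBcard]
  -- final arithmetic
  have hQ1 : 1 ≤ Q.card := by
    exact Nat.one_le_iff_ne_zero.mpr (Finset.card_ne_zero_of_mem
      ((hmemQ 1).mpr ⟨one_ne_zero, ⟨1, (mul_one 1).symm⟩⟩))
  have h1 : Q.card - 1 = (q - 3) / 2 := by omega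
  have h2' : 2 ∣ q - 3 := by
    rcases hq with ⟨k, hk⟩; omega
  rw [h1, Nat.mul_div_assoc _ h2']
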